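/- Let D > 0 and let d₀, d₁ : S × A → ℝ be strictly positive with state marginals d_i(s) = Σ_a d_i(s,a) ≥ D for all s and i ∈ {0,1}. Set π_i(a|s) = d_i(s,a)/d_i(s); for α ∈ [0,1] set d_α = α d₁ + (1−α) d₀ and define H(d) = Σ_{s,a} d(s,a) log(d(s,a)/d(s)) with d(s) = Σ_a d(s,a). Then α H(d₁) + (1−α) H(d₀) − H(d_α) ≥ (D α (1−α)/2) Σ_{s,a} (π₁(a|s) − π₀(a|s))² = (D α (1−α)/2) ‖π₁ − π₀‖². -/

import Mathlib

open Finset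

private lemma entropy_sc_hasDeriv (y : ℝ) {t : ℝ} (ht : 0 < t) :
    HasDerivAt (fun t : ℝ => t * Real.log t - t * Real.log y - t + y - (t - y)^2/2)
      (Real.log t - Real.log y - (t - y)) t := by
  have h1 : HasDerivAt (fun t : ℝ => t * Real.log t) (Real.log t + 1) t :=
    Real.hasDerivAt_mul_log ht.ne'
  have h2 : HasDerivAt (fun t : ℝ => t * Real.log y) (Real.log y) t := by
    simpa using (hasDerivAt_id t).mul_const (Real.log y)
  have h3 : HasDerivAt (fun t : ℝ => (t - y)^2/2) (t - y) t := by
    have := (((hasDerivAt_id t).sub_const y).pow 2).div_const 2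
    simpa [mul_comm] using this
  have := (((h1.sub h2).sub (hasDerivAt_id t)).add_const y).sub h3
  refine this.congr_deriv ?_
  ring

private lemma entropy_sc_key {x y : ℝ} (hx : 0 < x) (hx1 : x ≤ 1) (hy : 0 < y) (hy1 : y ≤ 1) :
    (x - y)^2 / 2 ≤ x * Real.log x - x * Real.log y - x + y := by
  set f : ℝ → ℝ := fun t => t * Real.log t - t * Real.log y - t + y - (t - y)^2/2 with hf
  have hfy : f y = 0 := by simp [hf]
  have hcont : ∀ {u v : ℝ}, 0 < u → ContinuousOn f (Set.Icc u v) := by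
    intro u v hu
    apply ContinuousOn.sub
    apply ContinuousOn.add
    apply ContinuousOn.sub
    apply ContinuousOn.sub
    · exact ContinuousOn.mul continuousOn_id (Real.continuousOn_log.mono (by
        intro t htt
        simp only [Set.mem_compl_iff, Set.mem_singleton_iff]
        exact (lt_of_lt_of_le hu htt.1).ne'))
    · exact (continuous_id.mul continuous_const).continuousOn
    · exact continuousOn_id
    · exact continuousOn_const
    · exact (((continuous_id.sub continuous_const).pow 2).div_const 2).continuousOn
  have hfx : 0 ≤ f x := by
    rcases le_total y x with hyx | hxy
    · -- f monotone on [y, 1]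
      have hmono : MonotoneOn f (Set.Icc y 1) := by
        apply monotoneOn_of_deriv_nonneg (convex_Icc y 1) (hcont hy)
        · intro t htt
          rw [interior_Icc] at htt
          exact ((entropy_sc_hasDeriv y (hy.trans htt.1)).differentiableAt).differentiableWithinAt
        · intro t htt
          rw [interior_Icc] at htt
          have ht0 : 0 < t := hy.trans htt.1
          rw [(entropy_sc_hasDeriv y ht0).deriv]
          have hlog : 1 - y / t ≤ Real.log (t / y) := by
            have := Real.one_sub_inv_le_log_of_pos (x := t / y) (div_pos ht0 hy)
            rwa [inv_div] at this
          rw [Real.log_div ht0.ne' hy.ne'] at hlog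
          have h1 : 1 - y / t = (t - y) / t := by field_simp
          rw [h1] at hlog
          have h2 : t - y ≤ (t - y) / t := by
            rw [le_div_iff₀ ht0]
            nlinarith [htt.1, htt.2, hy]
          linarith
      have := hmono (Set.mem_Icc.2 ⟨le_refl y, hy1⟩) (Set.mem_Icc.2 ⟨hyx, hx1⟩) hyx
      rw [hfy] at this
      exact this
    · -- f antitone on [x, y] (well, on (0, y])
      have hanti : AntitoneOn f (Set.Icc x y) := by
        apply antitoneOn_of_deriv_nonpos (convex_Icc x y) (hcont hx)
        · intro t htt
          rw [interior_Icc] at htt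
          exact ((entropy_sc_hasDeriv y (hx.trans htt.1)).differentiableAt).differentiableWithinAt
        · intro t htt
          rw [interior_Icc] at htt
          have ht0 : 0 < t := hx.trans htt.1
          rw [(entropy_sc_hasDeriv y ht0).deriv]
          have hlog : Real.log (t / y) ≤ t / y - 1 :=
            Real.log_le_sub_one_of_pos (div_pos ht0 hy)
          rw [Real.log_div ht0.ne' hy.ne'] at hlog
          have h2 : t / y - 1 ≤ t - y := by
            rw [div_sub' hy.ne', div_le_iff₀ hy]
            nlinarith [htt.2, hy1, ht0]
          linarith
      have := hanti (Set.mem_Icc.2 ⟨le_refl x, hxy⟩) (Set.mem_Icc.2 ⟨hxy, le_refl y⟩) hxy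
      rw [hfy] at this
      exact this
  simp only [hf] at hfx
  linarith


/-- strong convexity of the negative conditional entropy
`H(d) = Σ_{s,a} d(s,a) log(d(s,a)/d(s))` as a function of the occupancy measure: if both
state marginals are at least `D > 0`, then
`α H(d₁) + (1−α) H(d₀) − H(d_α) ≥ (D α (1−α)/2) Σ_{s,a} (π₁(a|s) − π₀(a|s))²
  = (D α (1−α)/2) ‖π₁ − π₀‖²`. -/
theorem entropy_strong_convexity
    {S A : Type*} [Fintype S] [Fintype A] [Nonempty S] [Nonempty A]
    (D : ℝ) (hD : 0 < D)
    (d₀ d₁ : S → A → ℝ) (hd₀ : ∀ s a, 0 < d₀ s a) (hd₁ : ∀ s a, 0 < d₁ s a)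
    (hD₀ : ∀ s, D ≤ ∑ a, d₀ s a) (hD₁ : ∀ s, D ≤ ∑ a, d₁ s a)
    (α : ℝ) (hα0 : 0 ≤ α) (hα1 : α ≤ 1)
    (dα : S → A → ℝ) (hdα : ∀ s a, dα s a = α * d₁ s a + (1 - α) * d₀ s a)
    (π₀ π₁ : S → A → ℝ)
    (hπ₀ : ∀ s a, π₀ s a = d₀ s a / ∑ a', d₀ s a')
    (hπ₁ : ∀ s a, π₁ s a = d₁ s a / ∑ a', d₁ s a')
    (H : (S → A → ℝ) → ℝ)
    (hH : ∀ d : S → A → ℝ, H d = ∑ s, ∑ a, d s a * Real.log (d s a / ∑ a', d s a')) :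
    D * α * (1 - α) / 2 * ∑ s, ∑ a, (π₁ s a - π₀ s a) ^ 2 ≤
      α * H d₁ + (1 - α) * H d₀ - H dα := by
  have main : ∀ s ∈ (Finset.univ : Finset S),
      D * α * (1 - α) / 2 * ∑ a, (π₁ s a - π₀ s a) ^ 2 ≤
        α * (∑ a, d₁ s a * Real.log (d₁ s a / ∑ a', d₁ s a'))
        + (1 - α) * (∑ a, d₀ s a * Real.log (d₀ s a / ∑ a', d₀ s a'))
        - ∑ a, dα s a * Real.log (dα s a / ∑ a', dα s a') := by
    intro s _
    set Z₁ := ∑ a', d₁ s a' with hZ₁d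
    set Z₀ := ∑ a', d₀ s a' with hZ₀d
    set Zα := ∑ a', dα s a' with hZαd
    clear_value Z₁ Z₀ Zα
    have hZ₁ : 0 < Z₁ := by rw [hZ₁d]; exact Finset.sum_pos (fun a _ => hd₁ s a) Finset.univ_nonempty
    have hZ₀ : 0 < Z₀ := by rw [hZ₀d]; exact Finset.sum_pos (fun a _ => hd₀ s a) Finset.univ_nonempty
    have hdαpos : ∀ a, 0 < dα s a := by
      intro a
      rw [hdα]
      rcases lt_or_eq_of_le hα1 with h | h
      · exact add_pos_of_nonneg_of_pos (mul_nonneg hα0 (hd₁ s a).le)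
          (mul_pos (by linarith) (hd₀ s a))
      · rw [h]; simpa using hd₁ s a
    have hZα : 0 < Zα := by rw [hZαd]; exact Finset.sum_pos (fun a _ => hdαpos a) Finset.univ_nonempty
    have hZαeq : Zα = α * Z₁ + (1 - α) * Z₀ := by
      rw [hZαd, hZ₁d, hZ₀d]
      simp only [hdα]
      rw [Finset.sum_add_distrib, ← Finset.mul_sum, ← Finset.mul_sum]
    have hπ₁' : ∀ a, π₁ s a = d₁ s a / Z₁ := fun a => by rw [hZ₁d]; exact hπ₁ s a
    have hπ₀' : ∀ a, π₀ s a = d₀ s a / Z₀ := fun a => by rw [hZ₀d]; exact hπ₀ s a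
    set β := α * Z₁ / Zα with hβd
    clear_value β
    have hβ0 : 0 ≤ β := by rw [hβd]; exact div_nonneg (mul_nonneg hα0 hZ₁.le) hZα.le
    have hβ1 : β ≤ 1 := by
      rw [hβd, div_le_one hZα]
      nlinarith [mul_nonneg (by linarith : (0:ℝ) ≤ 1 - α) hZ₀.le]
    have hq : ∀ a, dα s a / Zα = β * π₁ s a + (1 - β) * π₀ s a := by
      intro a
      rw [hπ₁' a, hπ₀' a, hdα, hβd]
      field_simp
      rw [hZαeq]
      ring
    have hπ₁pos : ∀ a, 0 < π₁ s a := fun a => by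
      rw [hπ₁' a]; exact div_pos (hd₁ s a) hZ₁
    have hπ₀pos : ∀ a, 0 < π₀ s a := fun a => by
      rw [hπ₀' a]; exact div_pos (hd₀ s a) hZ₀
    have hπ₁le : ∀ a, π₁ s a ≤ 1 := fun a => by
      rw [hπ₁' a, div_le_one hZ₁, hZ₁d]
      exact Finset.single_le_sum (fun a _ => (hd₁ s a).le) (Finset.mem_univ a)
    have hπ₀le : ∀ a, π₀ s a ≤ 1 := fun a => by
      rw [hπ₀' a, div_le_one hZ₀, hZ₀d]
      exact Finset.single_le_sum (fun a _ => (hd₀ s a).le) (Finset.mem_univ a)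
    have hqpos : ∀ a, 0 < dα s a / Zα := fun a => div_pos (hdαpos a) hZα
    have hqle : ∀ a, dα s a / Zα ≤ 1 := fun a => by
      rw [div_le_one hZα, hZαd]
      exact Finset.single_le_sum (fun a _ => (hdαpos a).le) (Finset.mem_univ a)
    have hsum₁ : ∑ a, π₁ s a = 1 := by
      simp only [hπ₁']; rw [← Finset.sum_div, ← hZ₁d, div_self hZ₁.ne']
    have hsum₀ : ∑ a, π₀ s a = 1 := by
      simp only [hπ₀']; rw [← Finset.sum_div, ← hZ₀d, div_self hZ₀.ne']
    have hsumq : ∑ a, dα s a / Zα = 1 := by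
      rw [← Finset.sum_div, ← hZαd, div_self hZα.ne']
    have hd₁eq : ∀ a, d₁ s a = Z₁ * π₁ s a := fun a => by
      rw [hπ₁' a]; field_simp
    have hd₀eq : ∀ a, d₀ s a = Z₀ * π₀ s a := fun a => by
      rw [hπ₀' a]; field_simp
    -- lower bounds on the conditional KL terms
    have hU₁ : (1:ℝ)/2 * ∑ a, (π₁ s a - dα s a / Zα)^2 ≤
        ∑ a, π₁ s a * (Real.log (π₁ s a) - Real.log (dα s a / Zα)) := by
      have h := Finset.sum_le_sum (s := (Finset.univ : Finset A)) (fun a _ =>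
        entropy_sc_key (hπ₁pos a) (hπ₁le a) (hqpos a) (hqle a))
      have heq : ∑ a, (π₁ s a * Real.log (π₁ s a) - π₁ s a * Real.log (dα s a / Zα)
          - π₁ s a + dα s a / Zα)
          = ∑ a, (π₁ s a * (Real.log (π₁ s a) - Real.log (dα s a / Zα)) - π₁ s a
            + dα s a / Zα) := Finset.sum_congr rfl (fun a _ => by ring)
      rw [heq, Finset.sum_add_distrib, Finset.sum_sub_distrib, hsum₁, hsumq] at h
      calc (1:ℝ)/2 * ∑ a, (π₁ s a - dα s a / Zα)^2
          = ∑ a, (π₁ s a - dα s a / Zα)^2 / 2 := by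
            rw [Finset.mul_sum]; exact Finset.sum_congr rfl (fun a _ => by ring)
        _ ≤ _ := by linarith
    have hU₀ : (1:ℝ)/2 * ∑ a, (π₀ s a - dα s a / Zα)^2 ≤
        ∑ a, π₀ s a * (Real.log (π₀ s a) - Real.log (dα s a / Zα)) := by
      have h := Finset.sum_le_sum (s := (Finset.univ : Finset A)) (fun a _ =>
        entropy_sc_key (hπ₀pos a) (hπ₀le a) (hqpos a) (hqle a))
      have heq : ∑ a, (π₀ s a * Real.log (π₀ s a) - π₀ s a * Real.log (dα s a / Zα)
          - π₀ s a + dα s a / Zα)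
          = ∑ a, (π₀ s a * (Real.log (π₀ s a) - Real.log (dα s a / Zα)) - π₀ s a
            + dα s a / Zα) := Finset.sum_congr rfl (fun a _ => by ring)
      rw [heq, Finset.sum_add_distrib, Finset.sum_sub_distrib, hsum₀, hsumq] at h
      calc (1:ℝ)/2 * ∑ a, (π₀ s a - dα s a / Zα)^2
          = ∑ a, (π₀ s a - dα s a / Zα)^2 / 2 := by
            rw [Finset.mul_sum]; exact Finset.sum_congr rfl (fun a _ => by ring)
        _ ≤ _ := by linarith
    have hsq₁ : ∑ a, (π₁ s a - dα s a / Zα)^2 = (1-β)^2 * ∑ a, (π₁ s a - π₀ s a)^2 := by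
      rw [Finset.mul_sum]
      exact Finset.sum_congr rfl (fun a _ => by rw [hq a]; ring)
    have hsq₀ : ∑ a, (π₀ s a - dα s a / Zα)^2 = β^2 * ∑ a, (π₁ s a - π₀ s a)^2 := by
      rw [Finset.mul_sum]
      exact Finset.sum_congr rfl (fun a _ => by rw [hq a]; ring)
    have hE : α * (∑ a, d₁ s a * Real.log (d₁ s a / Z₁))
        + (1 - α) * (∑ a, d₀ s a * Real.log (d₀ s a / Z₀))
        - ∑ a, dα s a * Real.log (dα s a / Zα)
        = α * Z₁ * (∑ a, π₁ s a * (Real.log (π₁ s a) - Real.log (dα s a / Zα)))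
        + (1 - α) * Z₀ * (∑ a, π₀ s a * (Real.log (π₀ s a) - Real.log (dα s a / Zα))) := by
      have lhsE : α * (∑ a, d₁ s a * Real.log (d₁ s a / Z₁))
          + (1 - α) * (∑ a, d₀ s a * Real.log (d₀ s a / Z₀))
          - ∑ a, dα s a * Real.log (dα s a / Zα)
          = ∑ a, (α * (d₁ s a * Real.log (d₁ s a / Z₁))
            + (1 - α) * (d₀ s a * Real.log (d₀ s a / Z₀))
            - dα s a * Real.log (dα s a / Zα)) := by
        rw [Finset.mul_sum, Finset.mul_sum, ← Finset.sum_add_distrib, ← Finset.sum_sub_distrib]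
      have rhsE : α * Z₁ * (∑ a, π₁ s a * (Real.log (π₁ s a) - Real.log (dα s a / Zα)))
          + (1 - α) * Z₀ * (∑ a, π₀ s a * (Real.log (π₀ s a) - Real.log (dα s a / Zα)))
          = ∑ a, (α * Z₁ * (π₁ s a * (Real.log (π₁ s a) - Real.log (dα s a / Zα)))
            + (1 - α) * Z₀ * (π₀ s a * (Real.log (π₀ s a) - Real.log (dα s a / Zα)))) := by
        rw [Finset.mul_sum, Finset.mul_sum, ← Finset.sum_add_distrib]
      rw [lhsE, rhsE]
      refine Finset.sum_congr rfl (fun a _ => ?_)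
      rw [← hπ₁' a, ← hπ₀' a]
      generalize Real.log (dα s a / Zα) = L
      rw [hdα s a, hd₁eq a, hd₀eq a]
      ring
    have hscal : D * α * (1 - α) ≤ α * Z₁ * (1 - β)^2 + (1 - α) * Z₀ * β^2 := by
      have hDZ₁ : D ≤ Z₁ := by rw [hZ₁d]; exact hD₁ s
      have hDZ₀ : D ≤ Z₀ := by rw [hZ₀d]; exact hD₀ s
      have t1 : 0 ≤ α * (Z₁ - D) * (1 - β)^2 :=
        mul_nonneg (mul_nonneg hα0 (by linarith)) (sq_nonneg _)
      have t2 : 0 ≤ (1 - α) * (Z₀ - D) * β^2 :=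
        mul_nonneg (mul_nonneg (by linarith) (by linarith)) (sq_nonneg _)
      have t3 : 0 ≤ D * (β - α)^2 := mul_nonneg hD.le (sq_nonneg _)
      nlinarith [t1, t2, t3]
    have hSq : 0 ≤ ∑ a, (π₁ s a - π₀ s a)^2 :=
      Finset.sum_nonneg (fun a _ => sq_nonneg _)
    rw [hE]
    have h1 : α * Z₁ * ((1:ℝ)/2 * ((1-β)^2 * ∑ a, (π₁ s a - π₀ s a)^2))
        ≤ α * Z₁ * ∑ a, π₁ s a * (Real.log (π₁ s a) - Real.log (dα s a / Zα)) := by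
      apply mul_le_mul_of_nonneg_left _ (mul_nonneg hα0 hZ₁.le)
      rw [← hsq₁]; exact hU₁
    have h2 : (1 - α) * Z₀ * ((1:ℝ)/2 * (β^2 * ∑ a, (π₁ s a - π₀ s a)^2))
        ≤ (1 - α) * Z₀ * ∑ a, π₀ s a * (Real.log (π₀ s a) - Real.log (dα s a / Zα)) := by
      apply mul_le_mul_of_nonneg_left _ (mul_nonneg (by linarith) hZ₀.le)
      rw [← hsq₀]; exact hU₀
    have h3 := mul_le_mul_of_nonneg_right hscal (by positivity :
      (0:ℝ) ≤ (∑ a, (π₁ s a - π₀ s a)^2) / 2)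
    linarith [h1, h2, h3]
  have := Finset.sum_le_sum main
  rw [hH d₁, hH d₀, hH dα, Finset.mul_sum, Finset.mul_sum, Finset.mul_sum,
    ← Finset.sum_add_distrib, ← Finset.sum_sub_distrib]
  exact this
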